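/- Let m ≥ 1, let Ω ⊆ ℝ^m be a bounded open set, write E = ℝ^m ∖ closure(Ω). Let a, b, c : ℝ^m → ℝ be continuous with b(x) > 0 and c(x) ≥ 0 on ℝ^m ∖ Ω, sup_{x ∈ ℝ^m∖Ω} a₋(x)/b(x) < +∞ and sup_{x ∈ ℝ^m∖Ω} c(x)/b(x) < +∞, and let σ > 1, τ < 1. Let X : ℝ^m → ℝ^m be a continuous vector field and Lw = Δw − ⟨X, ∇w⟩, and assume the (1/b)-weak maximum principle holds for L on E: for every C² function w on E with w* := sup_E w < +∞ and every γ < w*, inf over {x ∈ E : w(x) > γ} of (1/b(x))·Lw(x) ≤ 0. If u and v are functions on ℝ^m ∖ Ω, continuous there and C² on E, both solving Lu + a(x)u − b(x)u^σ + c(x)u^τ = 0 on E, with u = v on ∂Ω and C₁ ≤ u ≤ C₂, C₁ ≤ v ≤ C₂ on ℝ^m ∖ Ω for some constants C₂ ≥ C₁ > 0, then u ≡ v on ℝ^m ∖ Ω. -/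

import Mathlib

open Real Set

/-- The Euclidean Laplacian: trace of the Hessian. -/
noncomputable def lap {m : ℕ} (u : EuclideanSpace ℝ (Fin m) → ℝ)
    (x : EuclideanSpace ℝ (Fin m)) : ℝ :=
  ∑ i : Fin m, iteratedFDeriv ℝ 2 u x ![EuclideanSpace.single i 1, EuclideanSpace.single i 1]

/-- The drift operator `L w = Δ w - ⟨X, ∇ w⟩`. -/
noncomputable def Lop {m : ℕ} (X : EuclideanSpace ℝ (Fin m) → EuclideanSpace ℝ (Fin m))
    (w : EuclideanSpace ℝ (Fin m) → ℝ) (x : EuclideanSpace ℝ (Fin m)) : ℝ :=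
  lap w x - (inner ℝ (X x) (gradient w x) : ℝ)

/-- Lipschitz-type bound for `rpow` on a positive interval. -/
lemma rpow_lip (p : ℝ) {s t : ℝ} (hs : 0 < s) (hst : s ≤ t) :
    |t ^ p - s ^ p| ≤ |p| * max (s ^ (p - 1)) (t ^ (p - 1)) * (t - s) := by
  have h := norm_image_sub_le_of_norm_deriv_le_segment'
    (f := fun x : ℝ => x ^ p) (f' := fun x : ℝ => p * x ^ (p - 1)) (a := s) (b := t)
    (C := |p| * max (s ^ (p - 1)) (t ^ (p - 1)))
    (fun x hx => (Real.hasDerivAt_rpow_const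
      (Or.inl (ne_of_gt (lt_of_lt_of_le hs hx.1)))).hasDerivWithinAt)
    (fun x hx => by
      have hxpos : 0 < x := lt_of_lt_of_le hs hx.1
      have hxle : x ≤ t := le_of_lt hx.2
      have hb : x ^ (p - 1) ≤ max (s ^ (p - 1)) (t ^ (p - 1)) := by
        rcases le_or_gt 0 (p - 1) with hp | hp
        · exact le_max_of_le_right (Real.rpow_le_rpow hxpos.le hxle hp)
        · exact le_max_of_le_left (Real.rpow_le_rpow_of_nonpos hs hx.1 hp.le)
      have : ‖p * x ^ (p - 1)‖ = |p| * x ^ (p - 1) := by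
        rw [norm_mul, Real.norm_eq_abs, Real.norm_eq_abs,
          abs_of_nonneg (Real.rpow_nonneg hxpos.le _)]
      rw [this]
      exact mul_le_mul_of_nonneg_left hb (abs_nonneg p))
    t (right_mem_Icc.2 hst)
  simpa [Real.norm_eq_abs] using h

/-- Linearity of the drift operator on an open set where both functions are `C²`. -/
lemma Lop_sub_const_mul {m : ℕ} (X : EuclideanSpace ℝ (Fin m) → EuclideanSpace ℝ (Fin m))
    {u v : EuclideanSpace ℝ (Fin m) → ℝ} (lam : ℝ) {E : Set (EuclideanSpace ℝ (Fin m))}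
    (hEo : IsOpen E) (hu : ContDiffOn ℝ 2 u E) (hv : ContDiffOn ℝ 2 v E)
    {x : EuclideanSpace ℝ (Fin m)} (hx : x ∈ E) :
    Lop X (fun y => u y - lam * v y) x = Lop X u x - lam * Lop X v x := by
  have hUD : UniqueDiffOn ℝ E := hEo.uniqueDiffOn
  have hu2 : ContDiffOn ℝ ((2 : ℕ) : ℕ∞) u E := by exact_mod_cast hu
  have hv2 : ContDiffOn ℝ ((2 : ℕ) : ℕ∞) v E := by exact_mod_cast hv
  have hux : DifferentiableAt ℝ u x :=
    (hu.contDiffAt (hEo.mem_nhds hx)).differentiableAt two_ne_zero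
  have hvx : DifferentiableAt ℝ v x :=
    (hv.contDiffAt (hEo.mem_nhds hx)).differentiableAt two_ne_zero
  have hsmul : ContDiffOn ℝ ((2 : ℕ) : ℕ∞) ((-lam) • v) E := by exact hv2.const_smul (-lam)
  have hiter : iteratedFDeriv ℝ 2 (fun y => u y - lam * v y) x =
      iteratedFDeriv ℝ 2 u x - lam • iteratedFDeriv ℝ 2 v x := by
    have heq : (fun y => u y - lam * v y) = (u + (-lam) • v) := by
      funext y; simp [smul_eq_mul]; ring
    rw [heq, ← iteratedFDerivWithin_of_isOpen 2 hEo hx,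
      iteratedFDerivWithin_add_apply (hu2 x hx) (hsmul x hx) hUD hx,
      iteratedFDerivWithin_const_smul_apply (hv2 x hx) hUD hx,
      iteratedFDerivWithin_of_isOpen 2 hEo hx,
      iteratedFDerivWithin_of_isOpen 2 hEo hx]
    module
  have hgrad : gradient (fun y => u y - lam * v y) x =
      gradient u x - lam • gradient v x := by
    unfold gradient
    rw [fderiv_fun_sub hux (hvx.const_mul lam), fderiv_const_mul hvx lam, map_sub, map_smul]
  unfold Lop lap
  rw [hiter, hgrad, inner_sub_right, real_inner_smul_right]
  simp only [ContinuousMultilinearMap.sub_apply, ContinuousMultilinearMap.smul_apply,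
    smul_eq_mul, Finset.sum_sub_distrib]
  rw [show (∑ i : Fin m, lam * iteratedFDeriv ℝ 2 v x
      ![EuclideanSpace.single i 1, EuclideanSpace.single i 1]) = lam * ∑ i : Fin m,
      iteratedFDeriv ℝ 2 v x ![EuclideanSpace.single i 1, EuclideanSpace.single i 1]
      from (Finset.mul_sum _ _ _).symm]
  ring

set_option maxHeartbeats 1000000 in
/-- The elementary real-variable estimate behind the comparison argument. -/
lemma lichnerowicz_pointwise {σ τ lam C₁ C₂ M₁ M₂ U V A B C δ : ℝ}
    (hσ : 1 < σ) (hτ : τ < 1) (hlam1 : 1 < lam) (hC₁ : 0 < C₁)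
    (hB : 0 < B) (hC : 0 ≤ C)
    (hAB : (-min A 0) / B ≤ M₁) (hCB : C / B ≤ M₂)
    (hM₁0 : 0 ≤ M₁) (hM₂0 : 0 ≤ M₂)
    (hU1 : C₁ ≤ U) (hU2 : U ≤ C₂) (hV1 : C₁ ≤ V) (hV2 : V ≤ C₂)
    (h1 : U ≤ lam * V) (h2 : lam * V - U < δ) (hδ0 : 0 < δ) (hδ1 : δ ≤ (lam - 1) * C₁) :
    (lam ^ σ - lam) * C₁ ^ σ
      - (M₁ + σ * (lam * C₂) ^ (σ - 1) + M₂ * (|τ| * C₁ ^ (τ - 1))) * δ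
    ≤ (A / B) * (lam * V - U) + (U ^ σ - lam * V ^ σ) + (C / B) * (lam * V ^ τ - U ^ τ) := by
  have hlam0 : (0:ℝ) < lam := by linarith
  have hUpos : (0:ℝ) < U := lt_of_lt_of_le hC₁ hU1
  have hVpos : (0:ℝ) < V := lt_of_lt_of_le hC₁ hV1
  have hC₂ : (0:ℝ) < C₂ := lt_of_lt_of_le hUpos hU2
  have h3 : lam * V ≤ lam * C₂ := mul_le_mul_of_nonneg_left hV2 hlam0.le
  have h4 : C₁ ≤ lam * V := by
    have := le_mul_of_one_le_left hVpos.le hlam1.le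
    linarith
  set K₁ : ℝ := σ * (lam * C₂) ^ (σ - 1) with hK₁
  set K₂ : ℝ := |τ| * C₁ ^ (τ - 1) with hK₂
  have hK₂0 : 0 ≤ K₂ := mul_nonneg (abs_nonneg τ) (Real.rpow_nonneg hC₁.le _)
  have hK₁0 : 0 ≤ K₁ := by
    rw [hK₁]
    exact mul_nonneg (by linarith) (Real.rpow_nonneg (by positivity) _)
  have est1 : -(M₁ * δ) ≤ (A / B) * (lam * V - U) := by
    have hma : -(M₁ * B) ≤ A := by
      have h := hAB
      rw [div_le_iff₀ hB] at h
      have := min_le_left A 0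
      linarith
    have hq : -M₁ ≤ A / B := by rw [le_div_iff₀ hB]; linarith
    have ha1 := mul_le_mul_of_nonneg_right hq (show (0:ℝ) ≤ lam * V - U by linarith)
    have ha2 := mul_le_mul_of_nonneg_left h2.le hM₁0
    rw [neg_mul] at ha1
    linarith
  have est2 : (lam ^ σ - lam) * C₁ ^ σ - K₁ * δ ≤ U ^ σ - lam * V ^ σ := by
    have hlip := rpow_lip σ hUpos h1
    have hmax : max (U ^ (σ - 1)) ((lam * V) ^ (σ - 1)) ≤ (lam * C₂) ^ (σ - 1) := by
      refine max_le ?_ ?_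
      · exact Real.rpow_le_rpow hUpos.le (by linarith) (by linarith)
      · exact Real.rpow_le_rpow (by positivity) h3 (by linarith)
    have habs : (lam * V) ^ σ - U ^ σ ≤ K₁ * δ := by
      have h5 : |(lam * V) ^ σ - U ^ σ| ≤ K₁ * (lam * V - U) := by
        calc |(lam * V) ^ σ - U ^ σ| ≤
            |σ| * max (U ^ (σ - 1)) ((lam * V) ^ (σ - 1)) * (lam * V - U) := hlip
          _ ≤ K₁ * (lam * V - U) := by
            rw [hK₁, abs_of_pos (by linarith : (0:ℝ) < σ)]
            exact mul_le_mul_of_nonneg_right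
              (mul_le_mul_of_nonneg_left hmax (by linarith)) (by linarith)
      have h6 := le_trans (le_abs_self _) h5
      have h8 := mul_le_mul_of_nonneg_left h2.le hK₁0
      linarith
    have hmul : (lam * V) ^ σ = lam ^ σ * V ^ σ := Real.mul_rpow hlam0.le hVpos.le
    have hVσ : C₁ ^ σ ≤ V ^ σ := Real.rpow_le_rpow hC₁.le hV1 (by linarith)
    have hlamσ : lam < lam ^ σ := by
      have := Real.rpow_lt_rpow_of_exponent_lt hlam1 hσ
      rwa [Real.rpow_one] at this
    rw [hmul] at habs
    have h9 := mul_le_mul_of_nonneg_left hVσ (by linarith : (0:ℝ) ≤ lam ^ σ - lam)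
    have h10 : (lam ^ σ - lam) * C₁ ^ σ = lam ^ σ * C₁ ^ σ - lam * C₁ ^ σ := by ring
    have h11 : (lam ^ σ - lam) * V ^ σ = lam ^ σ * V ^ σ - lam * V ^ σ := by ring
    linarith
  have est3 : -(M₂ * K₂ * δ) ≤ (C / B) * (lam * V ^ τ - U ^ τ) := by
    have hlamτ : lam ^ τ ≤ lam := by
      have := Real.rpow_le_rpow_of_exponent_le hlam1.le hτ.le
      rwa [Real.rpow_one] at this
    have hmul : (lam * V) ^ τ = lam ^ τ * V ^ τ := Real.mul_rpow hlam0.le hVpos.le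
    have hVτ : (0:ℝ) ≤ V ^ τ := Real.rpow_nonneg hVpos.le τ
    have hstep1 : (lam * V) ^ τ ≤ lam * V ^ τ := by
      rw [hmul]
      exact mul_le_mul_of_nonneg_right hlamτ hVτ
    have hlip := rpow_lip τ hUpos h1
    have hmax : max (U ^ (τ - 1)) ((lam * V) ^ (τ - 1)) ≤ C₁ ^ (τ - 1) := by
      refine max_le ?_ ?_
      · exact Real.rpow_le_rpow_of_nonpos hC₁ hU1 (by linarith)
      · exact Real.rpow_le_rpow_of_nonpos hC₁ h4 (by linarith)
    have hstep2 : U ^ τ - (lam * V) ^ τ ≤ K₂ * δ := by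
      have h5 : |(lam * V) ^ τ - U ^ τ| ≤ K₂ * (lam * V - U) := by
        calc |(lam * V) ^ τ - U ^ τ| ≤
            |τ| * max (U ^ (τ - 1)) ((lam * V) ^ (τ - 1)) * (lam * V - U) := hlip
          _ ≤ K₂ * (lam * V - U) := by
            rw [hK₂]
            exact mul_le_mul_of_nonneg_right
              (mul_le_mul_of_nonneg_left hmax (abs_nonneg τ)) (by linarith)
      have h7 := neg_abs_le ((lam * V) ^ τ - U ^ τ)
      have h8 := mul_le_mul_of_nonneg_left h2.le hK₂0
      linarith
    have hq0 : 0 ≤ C / B := div_nonneg hC hB.le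
    have ht : -(K₂ * δ) ≤ lam * V ^ τ - U ^ τ := by linarith
    have hKδ : 0 ≤ K₂ * δ := mul_nonneg hK₂0 hδ0.le
    have hh1 : C / B * (-(K₂ * δ)) ≤ C / B * (lam * V ^ τ - U ^ τ) :=
      mul_le_mul_of_nonneg_left ht hq0
    rw [mul_neg] at hh1
    have hh2 : C / B * (K₂ * δ) ≤ M₂ * (K₂ * δ) := mul_le_mul_of_nonneg_right hCB hKδ
    linarith
  have hexp : (M₁ + K₁ + M₂ * K₂) * δ = M₁ * δ + K₁ * δ + M₂ * K₂ * δ := by ring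
  linarith [est1, est2, est3]

set_option maxHeartbeats 1000000 in
/-- The exterior comparison: any two pinched solutions satisfy `u ≤ v` on `E`. -/
lemma exterior_comparison {m : ℕ}
    {E : Set (EuclideanSpace ℝ (Fin m))} (hEo : IsOpen E) (hEne : E.Nonempty)
    {a b c : EuclideanSpace ℝ (Fin m) → ℝ}
    (hbpos : ∀ x ∈ E, 0 < b x) (hcpos : ∀ x ∈ E, 0 ≤ c x)
    {M₁ M₂ : ℝ} (hab : ∀ x ∈ E, (-min (a x) 0) / b x ≤ M₁) (hcb : ∀ x ∈ E, c x / b x ≤ M₂)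
    {σ τ : ℝ} (hσ : 1 < σ) (hτ : τ < 1)
    (X : EuclideanSpace ℝ (Fin m) → EuclideanSpace ℝ (Fin m))
    (hWMP : ∀ w : EuclideanSpace ℝ (Fin m) → ℝ, ContDiffOn ℝ 2 w E →
      BddAbove (w '' E) → ∀ γ < sSup (w '' E),
        sInf ((fun x => (1 / b x) * Lop X w x) '' {x ∈ E | γ < w x}) ≤ 0)
    {u v : EuclideanSpace ℝ (Fin m) → ℝ}
    (huC2 : ContDiffOn ℝ 2 u E) (hvC2 : ContDiffOn ℝ 2 v E)
    (hueq : ∀ x ∈ E, Lop X u x + a x * u x - b x * u x ^ σ + c x * u x ^ τ = 0)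
    (hveq : ∀ x ∈ E, Lop X v x + a x * v x - b x * v x ^ σ + c x * v x ^ τ = 0)
    {C₁ C₂ : ℝ} (hC₁ : 0 < C₁)
    (hupinch : ∀ x ∈ E, C₁ ≤ u x ∧ u x ≤ C₂)
    (hvpinch : ∀ x ∈ E, C₁ ≤ v x ∧ v x ≤ C₂) :
    ∀ x ∈ E, u x ≤ v x := by
  by_contra hcon
  push_neg at hcon
  obtain ⟨x₀, hx₀E, hx₀⟩ := hcon
  have hC₂ : 0 < C₂ := lt_of_lt_of_le hC₁ ((hupinch x₀ hx₀E).1.trans (hupinch x₀ hx₀E).2)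
  set S : Set ℝ := (fun x => u x / v x) '' E with hS
  have hSne : S.Nonempty := hEne.image _
  have hSbdd : BddAbove S := by
    refine ⟨C₂ / C₁, ?_⟩
    rintro _ ⟨x, hx, rfl⟩
    exact div_le_div₀ (le_of_lt hC₂) (hupinch x hx).2 hC₁ (hvpinch x hx).1
  set lam : ℝ := sSup S with hlam
  have hlam_ub : ∀ x ∈ E, u x / v x ≤ lam := fun x hx => le_csSup hSbdd ⟨x, hx, rfl⟩
  have happrox : ∀ ε : ℝ, 0 < ε → ∃ z ∈ E, lam - ε < u z / v z := by
    intro ε hε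
    have hlt : lam - ε < sSup S := by rw [← hlam]; exact sub_lt_self lam hε
    obtain ⟨r, hrS, hrgt⟩ := exists_lt_of_lt_csSup hSne hlt
    obtain ⟨z, hzE, hzr⟩ := hrS
    exact ⟨z, hzE, by rw [← hzr] at hrgt; exact hrgt⟩
  clear_value lam
  clear hlam hSne hSbdd hS
  have hvposE : ∀ x ∈ E, 0 < v x := fun x hx => lt_of_lt_of_le hC₁ (hvpinch x hx).1
  have hlam1 : 1 < lam :=
    lt_of_lt_of_le ((one_lt_div (hvposE x₀ hx₀E)).2 hx₀) (hlam_ub x₀ hx₀E)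
  have hlam0 : 0 < lam := lt_trans one_pos hlam1
  have hwle : ∀ x ∈ E, u x ≤ lam * v x := by
    intro x hx
    have h := hlam_ub x hx
    rw [div_le_iff₀ (hvposE x hx)] at h
    linarith
  -- constants
  have hM₁0 : 0 ≤ M₁ :=
    le_trans (div_nonneg (neg_nonneg.2 (min_le_right _ _)) (hbpos x₀ hx₀E).le) (hab x₀ hx₀E)
  have hM₂0 : 0 ≤ M₂ :=
    le_trans (div_nonneg (hcpos x₀ hx₀E) (hbpos x₀ hx₀E).le) (hcb x₀ hx₀E)
  set K₁ : ℝ := σ * (lam * C₂) ^ (σ - 1) with hK₁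
  set K₂ : ℝ := |τ| * C₁ ^ (τ - 1) with hK₂
  have hK₁0 : 0 ≤ K₁ := by
    rw [hK₁]
    exact mul_nonneg (by linarith) (Real.rpow_nonneg (by positivity) _)
  have hK₂0 : 0 ≤ K₂ := mul_nonneg (abs_nonneg τ) (Real.rpow_nonneg hC₁.le _)
  set ε₀ : ℝ := (lam ^ σ - lam) * C₁ ^ σ with hε₀def
  have hlamσ : lam < lam ^ σ := by
    have := Real.rpow_lt_rpow_of_exponent_lt hlam1 hσ
    rwa [Real.rpow_one] at this
  have hε₀ : 0 < ε₀ := mul_pos (sub_pos.2 hlamσ) (Real.rpow_pos_of_pos hC₁ σ)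
  set D : ℝ := M₁ + K₁ + M₂ * K₂ + 1 with hD
  have hD0 : 0 < D := by positivity
  set δ : ℝ := min ((lam - 1) * C₁) (ε₀ / (2 * D)) with hδdef
  have hδ0 : 0 < δ := lt_min (mul_pos (by linarith) hC₁) (by positivity)
  have hδ1 : δ ≤ (lam - 1) * C₁ := min_le_left _ _
  have hδ2 : D * δ ≤ ε₀ / 2 := by
    have h := min_le_right ((lam - 1) * C₁) (ε₀ / (2 * D))
    calc D * δ ≤ D * (ε₀ / (2 * D)) := mul_le_mul_of_nonneg_left h hD0.le
      _ = ε₀ / 2 := by field_simp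
  clear_value K₁ K₂ ε₀ D δ
  set w : EuclideanSpace ℝ (Fin m) → ℝ := fun x => u x - lam * v x with hw
  have hwC2 : ContDiffOn ℝ 2 w E := huC2.sub (contDiffOn_const.mul hvC2)
  have hwbdd : BddAbove (w '' E) := by
    refine ⟨C₂, ?_⟩
    rintro _ ⟨x, hx, rfl⟩
    have h1 := (hupinch x hx).2
    have h2 := mul_pos hlam0 (hvposE x hx)
    simp only [hw]
    linarith
  clear_value w
  -- witness point
  obtain ⟨y, hyE, hrgt⟩ := happrox (δ / C₂) (by positivity)
  have hwy : -δ < w y := by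
    have hvy := hvposE y hyE
    have hvy2 := (hvpinch y hyE).2
    have hlt : (lam - δ / C₂) * v y < u y := by
      calc (lam - δ / C₂) * v y < (u y / v y) * v y :=
            mul_lt_mul_of_pos_right hrgt hvy
        _ = u y := by field_simp
    have hδC : δ / C₂ * v y ≤ δ := by
      rw [div_mul_eq_mul_div, div_le_iff₀ hC₂]
      exact mul_le_mul_of_nonneg_left hvy2 hδ0.le
    have hexp : (lam - δ / C₂) * v y = lam * v y - δ / C₂ * v y := by ring
    simp only [hw]
    linarith
  have hsupw : -δ < sSup (w '' E) :=
    lt_of_lt_of_le hwy (le_csSup hwbdd ⟨y, hyE, rfl⟩)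
  -- pointwise estimate
  have hpt : ∀ x ∈ E, -δ < w x → ε₀ / 2 ≤ (1 / b x) * Lop X w x := by
    intro x hx hwx
    have hbx := hbpos x hx
    have hU1 := (hupinch x hx).1
    have hU2 := (hupinch x hx).2
    have hV1 := (hvpinch x hx).1
    have hV2 := (hvpinch x hx).2
    have h1 : u x ≤ lam * v x := hwle x hx
    have h2 : lam * v x - u x < δ := by
      simp only [hw] at hwx; linarith
    have e1 : Lop X u x = b x * u x ^ σ - c x * u x ^ τ - a x * u x := by
      have := hueq x hx; linarith
    have e2 : Lop X v x = b x * v x ^ σ - c x * v x ^ τ - a x * v x := by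
      have := hveq x hx; linarith
    have hLop : Lop X w x = a x * (lam * v x - u x) + b x * (u x ^ σ - lam * v x ^ σ)
        + c x * (lam * v x ^ τ - u x ^ τ) := by
      rw [hw, show Lop X (fun y => u y - lam * v y) x = Lop X u x - lam * Lop X v x from
        Lop_sub_const_mul X lam hEo huC2 hvC2 hx, e1, e2]
      ring
    have hcomb : (1 / b x) * Lop X w x = (a x / b x) * (lam * v x - u x)
        + (u x ^ σ - lam * v x ^ σ) + (c x / b x) * (lam * v x ^ τ - u x ^ τ) := by
      rw [hLop]
      field_simp
    have hest := lichnerowicz_pointwise hσ hτ hlam1 hC₁ hbx (hcpos x hx)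
      (hab x hx) (hcb x hx) hM₁0 hM₂0 hU1 hU2 hV1 hV2 h1 h2 hδ0 hδ1
    rw [← hε₀def, ← hK₁, ← hK₂] at hest
    have hfin : (M₁ + K₁ + M₂ * K₂) * δ ≤ ε₀ / 2 := by
      have h9 : (M₁ + K₁ + M₂ * K₂) * δ ≤ D * δ := by
        rw [hD]
        have hexp : (M₁ + K₁ + M₂ * K₂ + 1) * δ = (M₁ + K₁ + M₂ * K₂) * δ + δ := by ring
        linarith
      linarith
    rw [hcomb]
    linarith
  -- conclude via the weak maximum principle
  have hInf := hWMP w hwC2 hwbdd (-δ) hsupw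
  have hlow : ε₀ / 2 ≤ sInf ((fun x => (1 / b x) * Lop X w x) '' {x ∈ E | -δ < w x}) := by
    refine le_csInf ⟨_, ⟨y, ⟨hyE, hwy⟩, rfl⟩⟩ ?_
    rintro _ ⟨x, ⟨hx, hwx⟩, rfl⟩
    exact hpt x hx hwx
  linarith

/-- Uniqueness on an exterior domain: the Lichnerowicz equation admits at most one
solution with given boundary data pinched between two positive constants, provided
the (1/b)-weak maximum principle holds for `L = Δ - ⟨X, ∇·⟩`. -/
theorem lichnerowicz_exterior_uniqueness {m : ℕ} (hm : 1 ≤ m)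
    (Ω : Set (EuclideanSpace ℝ (Fin m))) (hΩo : IsOpen Ω) (hΩb : Bornology.IsBounded Ω)
    (E : Set (EuclideanSpace ℝ (Fin m))) (hE : E = (closure Ω)ᶜ)
    (a b c : EuclideanSpace ℝ (Fin m) → ℝ)
    (ha : Continuous a) (hb : Continuous b) (hc : Continuous c)
    (hbpos : ∀ x ∈ Ωᶜ, 0 < b x) (hcpos : ∀ x ∈ Ωᶜ, 0 ≤ c x)
    (hab : ∃ M : ℝ, ∀ x ∈ Ωᶜ, (-min (a x) 0) / b x ≤ M)
    (hcb : ∃ M : ℝ, ∀ x ∈ Ωᶜ, c x / b x ≤ M)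
    (σ τ : ℝ) (hσ : 1 < σ) (hτ : τ < 1)
    (X : EuclideanSpace ℝ (Fin m) → EuclideanSpace ℝ (Fin m)) (hX : Continuous X)
    (hWMP : ∀ w : EuclideanSpace ℝ (Fin m) → ℝ, ContDiffOn ℝ 2 w E →
      BddAbove (w '' E) → ∀ γ < sSup (w '' E),
        sInf ((fun x => (1 / b x) * Lop X w x) '' {x ∈ E | γ < w x}) ≤ 0)
    (u v : EuclideanSpace ℝ (Fin m) → ℝ)
    (hucont : ContinuousOn u Ωᶜ) (hvcont : ContinuousOn v Ωᶜ)
    (huC2 : ContDiffOn ℝ 2 u E) (hvC2 : ContDiffOn ℝ 2 v E)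
    (hueq : ∀ x ∈ E, Lop X u x + a x * u x - b x * u x ^ σ + c x * u x ^ τ = 0)
    (hveq : ∀ x ∈ E, Lop X v x + a x * v x - b x * v x ^ σ + c x * v x ^ τ = 0)
    (hbdry : ∀ x ∈ frontier Ω, u x = v x)
    (C₁ C₂ : ℝ) (hC₁ : 0 < C₁) (hC₁₂ : C₁ ≤ C₂)
    (hupinch : ∀ x ∈ Ωᶜ, C₁ ≤ u x ∧ u x ≤ C₂)
    (hvpinch : ∀ x ∈ Ωᶜ, C₁ ≤ v x ∧ v x ≤ C₂) :
    ∀ x ∈ Ωᶜ, u x = v x := by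
  have hEo : IsOpen E := by rw [hE]; exact isClosed_closure.isOpen_compl
  have hEsub : E ⊆ Ωᶜ := by rw [hE]; exact compl_subset_compl.2 subset_closure
  have hEne : E.Nonempty := by
    obtain ⟨R, hR⟩ := (hΩb.closure).subset_closedBall 0
    refine ⟨EuclideanSpace.single (⟨0, by omega⟩ : Fin m) (|R| + 1), ?_⟩
    rw [hE]
    intro hmem
    have h1 := hR hmem
    rw [Metric.mem_closedBall, dist_zero_right, EuclideanSpace.norm_single] at h1
    have h2 : |R| + 1 ≤ ‖|R| + 1‖ := le_abs_self _
    have h3 : R ≤ |R| := le_abs_self R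
    linarith
  obtain ⟨M₁, hM₁⟩ := hab
  obtain ⟨M₂, hM₂⟩ := hcb
  have hbpos' : ∀ x ∈ E, 0 < b x := fun x hx => hbpos x (hEsub hx)
  have hcpos' : ∀ x ∈ E, 0 ≤ c x := fun x hx => hcpos x (hEsub hx)
  have hab' : ∀ x ∈ E, (-min (a x) 0) / b x ≤ M₁ := fun x hx => hM₁ x (hEsub hx)
  have hcb' : ∀ x ∈ E, c x / b x ≤ M₂ := fun x hx => hM₂ x (hEsub hx)
  have hup' : ∀ x ∈ E, C₁ ≤ u x ∧ u x ≤ C₂ := fun x hx => hupinch x (hEsub hx)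
  have hvp' : ∀ x ∈ E, C₁ ≤ v x ∧ v x ≤ C₂ := fun x hx => hvpinch x (hEsub hx)
  have h1 : ∀ x ∈ E, u x ≤ v x :=
    exterior_comparison hEo hEne hbpos' hcpos' hab' hcb' hσ hτ X hWMP
      huC2 hvC2 hueq hveq hC₁ hup' hvp'
  have h2 : ∀ x ∈ E, v x ≤ u x :=
    exterior_comparison hEo hEne hbpos' hcpos' hab' hcb' hσ hτ X hWMP
      hvC2 huC2 hveq hueq hC₁ hvp' hup'
  intro x hx
  by_cases hxc : x ∈ closure Ω
  · exact hbdry x ⟨hxc, fun hint => hx (hΩo.interior_eq ▸ hint)⟩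
  · have hxE : x ∈ E := by rw [hE]; exact hxc
    exact le_antisymm (h1 x hxE) (h2 x hxE)
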